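/- Convergence of Mano without momentum (deterministic setting). Let f : ℝ^{d×m} → ℝ be L-smooth and bounded below by f_inf, let γ > 0 and C > 0, and let T ∈ ℕ. Run Mano without momentum for T+1 iterations with step size η = C/√(T+1): g_t = ∇f(θ_t), v_t the column-wise tangent projection of g_t at θ_t, v̂_t its column-normalization, θ_{t+1} = θ_t − η√m · v̂_t. Assume for all t ≤ T that every column of θ_t and of v_t is nonzero and ‖v_t^{(j)}‖₂ ≥ γ ‖g_t^{(j)}‖₂ for every column j (i.e., sin(φ_t^{(j)}) ≥ γ for the angle φ_t^{(j)} between g_t^{(j)} and θ_t^{(j)}). Then min_{0 ≤ t ≤ T} ‖∇f(θ_t)‖_F ≤ (C₁ + C₂)/√(T+1), where C₁ = (f(θ_0) − f_inf)/(m^{1/2} γ C) and C₂ = L m^{3/2} C/(2γ). -/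

import Mathlib

open scoped BigOperators InnerProductSpace

/-- Euclidean norm of the `j`-th column of a matrix in
`ℝ^{d×m} = EuclideanSpace ℝ (Fin d × Fin m)`. -/
noncomputable def colNormE {d m : ℕ} (A : EuclideanSpace ℝ (Fin d × Fin m)) (j : Fin m) : ℝ :=
  Real.sqrt (∑ i, A (i, j) ^ 2)

/-- Column-normalization: each column is divided by its Euclidean norm. -/
noncomputable def colNormalizeE {d m : ℕ} (A : EuclideanSpace ℝ (Fin d × Fin m)) :
    EuclideanSpace ℝ (Fin d × Fin m) :=
  WithLp.toLp 2 (fun p => A p / colNormE A p.2)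

/-- Column-wise tangent projection of `g` at `θ`:
`v^{(j)} = g^{(j)} − ⟨g^{(j)}, θ̂^{(j)}⟩ θ̂^{(j)}` with `θ̂` the column-normalization of `θ`. -/
noncomputable def tangentProjE {d m : ℕ} (θ g : EuclideanSpace ℝ (Fin d × Fin m)) :
    EuclideanSpace ℝ (Fin d × Fin m) :=
  WithLp.toLp 2 (fun p => g p - (∑ i, g (i, p.2) * colNormalizeE θ (i, p.2)) * colNormalizeE θ p)

section Aux
variable {d m : ℕ}

lemma colNormE_nonneg (A : EuclideanSpace ℝ (Fin d × Fin m)) (j : Fin m) :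
    0 ≤ colNormE A j := Real.sqrt_nonneg _

lemma sq_colNormE (A : EuclideanSpace ℝ (Fin d × Fin m)) (j : Fin m) :
    colNormE A j ^ 2 = ∑ i, A (i, j) ^ 2 :=
  Real.sq_sqrt (Finset.sum_nonneg fun i _ => sq_nonneg _)

lemma norm_sq_euclid (x : EuclideanSpace ℝ (Fin d × Fin m)) :
    ‖x‖ ^ 2 = ∑ j, colNormE x j ^ 2 := by
  rw [EuclideanSpace.norm_eq, Real.sq_sqrt (Finset.sum_nonneg fun _ _ => sq_nonneg _),
    Fintype.sum_prod_type_right]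
  simp only [sq_colNormE, Real.norm_eq_abs, sq_abs]

lemma inner_euclid (x y : EuclideanSpace ℝ (Fin d × Fin m)) :
    ⟪x, y⟫_ℝ = ∑ p : Fin d × Fin m, x p * y p := by
  simp [PiLp.inner_apply, RCLike.inner_apply, mul_comm]

lemma unit_col (θ : EuclideanSpace ℝ (Fin d × Fin m)) (j : Fin m)
    (hθ : colNormE θ j ≠ 0) :
    ∑ i, (θ (i, j) / colNormE θ j) ^ 2 = 1 := by
  simp only [div_pow]
  rw [← Finset.sum_div, ← sq_colNormE, div_self (pow_ne_zero 2 hθ)]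

lemma tangent_col_sq (θ g : EuclideanSpace ℝ (Fin d × Fin m)) (j : Fin m)
    (hθ : colNormE θ j ≠ 0) :
    ∑ i, g (i, j) * tangentProjE θ g (i, j) = colNormE (tangentProjE θ g) j ^ 2 := by
  have hunit := unit_col θ j hθ
  set n := colNormE θ j with hn
  set c : ℝ := ∑ i, g (i, j) * (θ (i, j) / n) with hc
  have hv : ∀ i : Fin d, tangentProjE θ g (i, j) = g (i, j) - c * (θ (i, j) / n) := by
    intro i; simp only [tangentProjE, colNormalizeE, hc, WithLp.ofLp_toLp, ← hn]
  have h1 : ∑ i, g (i, j) * tangentProjE θ g (i, j)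
      = (∑ i, g (i, j) ^ 2) - c * c := by
    have e : ∀ i : Fin d, g (i, j) * tangentProjE θ g (i, j)
        = g (i, j) ^ 2 - c * (g (i, j) * (θ (i, j) / n)) := fun i => by rw [hv]; ring
    simp only [e]
    rw [Finset.sum_sub_distrib, ← Finset.mul_sum, ← hc]
  have h2 : colNormE (tangentProjE θ g) j ^ 2 = (∑ i, g (i, j) ^ 2) - c * c := by
    rw [sq_colNormE]
    have : ∀ i : Fin d, tangentProjE θ g (i, j) ^ 2
        = g (i, j) ^ 2 - 2 * c * (g (i, j) * (θ (i, j) / n)) + c ^ 2 * (θ (i, j) / n) ^ 2 := by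
      intro i; rw [hv]; ring
    simp only [this]
    rw [Finset.sum_add_distrib, Finset.sum_sub_distrib, ← Finset.mul_sum, ← Finset.mul_sum,
      ← hc, hunit]
    ring
  rw [h1, h2]

lemma normalize_col_sq (v : EuclideanSpace ℝ (Fin d × Fin m)) (j : Fin m)
    (hv : colNormE v j ≠ 0) :
    ∑ i, colNormalizeE v (i, j) ^ 2 = 1 := unit_col v j hv

lemma inner_grad_dir (θ g : EuclideanSpace ℝ (Fin d × Fin m))
    (hθ : ∀ j, colNormE θ j ≠ 0)
    (hv : ∀ j, colNormE (tangentProjE θ g) j ≠ 0) :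
    ⟪g, colNormalizeE (tangentProjE θ g)⟫_ℝ
      = ∑ j, colNormE (tangentProjE θ g) j := by
  rw [inner_euclid, Fintype.sum_prod_type_right]
  refine Finset.sum_congr rfl fun j _ => ?_
  have : ∑ i, g (i, j) * colNormalizeE (tangentProjE θ g) (i, j)
      = (∑ i, g (i, j) * tangentProjE θ g (i, j)) / colNormE (tangentProjE θ g) j := by
    rw [Finset.sum_div]
    exact Finset.sum_congr rfl fun i _ => by simp [colNormalizeE, mul_div_assoc]
  rw [this, tangent_col_sq θ g j (hθ j), sq, mul_div_assoc,
    div_self (hv j), mul_one]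

lemma norm_sq_normalize (v : EuclideanSpace ℝ (Fin d × Fin m))
    (hv : ∀ j, colNormE v j ≠ 0) :
    ‖colNormalizeE v‖ ^ 2 = m := by
  rw [norm_sq_euclid]
  have : ∀ j : Fin m, colNormE (colNormalizeE v) j ^ 2 = 1 := by
    intro j
    rw [sq_colNormE]
    exact unit_col v j (hv j)
  simp [this]

lemma norm_le_sum_colNorm (g : EuclideanSpace ℝ (Fin d × Fin m)) :
    ‖g‖ ≤ ∑ j, colNormE g j := by
  have h1 : ‖g‖ ^ 2 ≤ (∑ j, colNormE g j) ^ 2 := by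
    rw [norm_sq_euclid]
    exact Finset.sum_sq_le_sq_sum_of_nonneg fun j _ => colNormE_nonneg g j
  have h2 : 0 ≤ ∑ j, colNormE g j := Finset.sum_nonneg fun j _ => colNormE_nonneg g j
  nlinarith [norm_nonneg g]

end Aux

/-- convergence of Mano without momentum, deterministic setting: for
`L`-smooth `f` bounded below by `finf`, step size `η = C/√(T+1)`, Mano iterates
`θ_{t+1} = θ_t − η√m · v̂_t` with nonzero columns and `‖v_t^{(j)}‖₂ ≥ γ‖g_t^{(j)}‖₂`
(i.e. `sin(φ_t^{(j)}) ≥ γ`), we have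
`min_{0≤t≤T} ‖∇f(θ_t)‖_F ≤ (C₁ + C₂)/√(T+1)` with
`C₁ = (f(θ_0) − finf)/(m^{1/2} γ C)` and `C₂ = L m^{3/2} C/(2γ)`. -/
theorem mano_convergence_deterministic {d m : ℕ} (L finf γ C : ℝ)
    (hγ : 0 < γ) (hC : 0 < C) (T : ℕ)
    (f : EuclideanSpace ℝ (Fin d × Fin m) → ℝ)
    (hdiff : Differentiable ℝ f)
    (hsmooth : ∀ x y : EuclideanSpace ℝ (Fin d × Fin m),
      f y ≤ f x + ⟪gradient f x, y - x⟫_ℝ + L / 2 * ‖y - x‖ ^ 2)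
    (hbound : ∀ x, finf ≤ f x)
    (η : ℝ) (hη : η = C / Real.sqrt (T + 1))
    (θ : ℕ → EuclideanSpace ℝ (Fin d × Fin m))
    (hupd : ∀ t ≤ T, θ (t + 1) =
      θ t - (η * Real.sqrt m) • colNormalizeE (tangentProjE (θ t) (gradient f (θ t))))
    (hθcol : ∀ t ≤ T, ∀ j : Fin m, colNormE (θ t) j ≠ 0)
    (hvcol : ∀ t ≤ T, ∀ j : Fin m,
      colNormE (tangentProjE (θ t) (gradient f (θ t))) j ≠ 0)
    (hsin : ∀ t ≤ T, ∀ j : Fin m,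
      γ * colNormE (gradient f (θ t)) j ≤
        colNormE (tangentProjE (θ t) (gradient f (θ t))) j) :
    (Finset.range (T + 1)).inf' (Finset.nonempty_range_iff.mpr (Nat.succ_ne_zero T))
        (fun t => ‖gradient f (θ t)‖) ≤
      ((f (θ 0) - finf) / (Real.sqrt m * γ * C) +
        L * ((m : ℝ) * Real.sqrt m) * C / (2 * γ)) / Real.sqrt (T + 1) := by
  have hT1 : (0:ℝ) < (T:ℝ) + 1 := by positivity
  have hs : (0:ℝ) < Real.sqrt ((T:ℝ) + 1) := Real.sqrt_pos.mpr hT1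
  rcases Nat.eq_zero_or_pos m with hm0 | hm
  · subst hm0
    refine le_trans (Finset.inf'_le _ (Finset.mem_range.mpr (Nat.succ_pos T))) ?_
    have hLHS : ‖gradient f (θ 0)‖ = 0 := by
      have h2 : ‖gradient f (θ 0)‖ ^ 2 = 0 := by rw [norm_sq_euclid]; simp
      nlinarith [norm_nonneg (gradient f (θ 0))]
    rw [hLHS]
    simp
  · have hmR : (0:ℝ) < m := by exact_mod_cast hm
    have hsm : (0:ℝ) < Real.sqrt m := Real.sqrt_pos.mpr hmR
    have hηpos : 0 < η := by rw [hη]; positivity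
    have hstep : ∀ t ≤ T, η * Real.sqrt m * (γ * ‖gradient f (θ t)‖)
        ≤ f (θ t) - f (θ (t+1)) + L/2 * (η^2 * (m:ℝ)^2) := by
      intro t ht
      have hdiffθ : θ (t+1) - θ t
          = -((η * Real.sqrt m) • colNormalizeE (tangentProjE (θ t) (gradient f (θ t)))) := by
        rw [hupd t ht, sub_sub_cancel_left]
      have hinner : ⟪gradient f (θ t), θ (t+1) - θ t⟫_ℝ
          = -(η * Real.sqrt m
              * ∑ j, colNormE (tangentProjE (θ t) (gradient f (θ t))) j) := by
        rw [hdiffθ, inner_neg_right, real_inner_smul_right,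
          inner_grad_dir (θ t) (gradient f (θ t)) (hθcol t ht) (hvcol t ht)]
      have hnorm : ‖θ (t+1) - θ t‖^2 = η^2 * (m:ℝ)^2 := by
        rw [hdiffθ, norm_neg, norm_smul, mul_pow, norm_sq_normalize _ (hvcol t ht),
          Real.norm_eq_abs, sq_abs, mul_pow, Real.sq_sqrt hmR.le]
        ring
      have hsm2 := hsmooth (θ t) (θ (t+1))
      rw [hinner, hnorm] at hsm2
      have hSg : γ * ‖gradient f (θ t)‖
          ≤ ∑ j, colNormE (tangentProjE (θ t) (gradient f (θ t))) j := by
        calc γ * ‖gradient f (θ t)‖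
            ≤ γ * ∑ j, colNormE (gradient f (θ t)) j :=
              mul_le_mul_of_nonneg_left (norm_le_sum_colNorm _) hγ.le
          _ = ∑ j, γ * colNormE (gradient f (θ t)) j := Finset.mul_sum _ _ _
          _ ≤ _ := Finset.sum_le_sum fun j _ => hsin t ht j
      have hmul := mul_le_mul_of_nonneg_left hSg
        (by positivity : (0:ℝ) ≤ η * Real.sqrt m)
      linarith
    set M := (Finset.range (T + 1)).inf'
        (Finset.nonempty_range_iff.mpr (Nat.succ_ne_zero T))
        (fun t => ‖gradient f (θ t)‖) with hM
    have hsum : ((T:ℝ)+1) * (η * Real.sqrt m * (γ * M))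
        ≤ (f (θ 0) - finf) + ((T:ℝ)+1) * (L/2 * (η^2 * (m:ℝ)^2)) := by
      have h1 : ∑ _t ∈ Finset.range (T+1), η * Real.sqrt m * (γ * M)
          ≤ ∑ t ∈ Finset.range (T+1),
              (f (θ t) - f (θ (t+1)) + L/2 * (η^2 * (m:ℝ)^2)) := by
        refine Finset.sum_le_sum fun t ht => ?_
        refine le_trans ?_ (hstep t (Nat.lt_succ_iff.mp (Finset.mem_range.mp ht)))
        have hMle : M ≤ ‖gradient f (θ t)‖ := Finset.inf'_le _ ht
        have : γ * M ≤ γ * ‖gradient f (θ t)‖ := mul_le_mul_of_nonneg_left hMle hγ.le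
        exact mul_le_mul_of_nonneg_left this (by positivity)
      rw [Finset.sum_const, Finset.card_range, nsmul_eq_mul, Finset.sum_add_distrib,
        Finset.sum_range_sub' (fun t => f (θ t)), Finset.sum_const, Finset.card_range,
        nsmul_eq_mul] at h1
      push_cast at h1
      have := hbound (θ (T+1))
      linarith
    have hD : (0:ℝ) < ((T:ℝ)+1) * (η * Real.sqrt m * γ) := by positivity
    have hMD : M * (((T:ℝ)+1) * (η * Real.sqrt m * γ))
        ≤ (f (θ 0) - finf) + ((T:ℝ)+1) * (L/2 * (η^2 * (m:ℝ)^2)) := by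
      have e : M * (((T:ℝ)+1) * (η * Real.sqrt m * γ))
          = ((T:ℝ)+1) * (η * Real.sqrt m * (γ * M)) := by ring
      rw [e]; exact hsum
    have hfin : M ≤ ((f (θ 0) - finf) + ((T:ℝ)+1) * (L/2 * (η^2 * (m:ℝ)^2)))
        / (((T:ℝ)+1) * (η * Real.sqrt m * γ)) := (le_div_iff₀ hD).mpr hMD
    refine hfin.trans_eq ?_
    rw [hη]
    set a := Real.sqrt ((T:ℝ)+1) with ha
    set b := Real.sqrt (m:ℝ) with hb
    have ha2 : a^2 = (T:ℝ)+1 := Real.sq_sqrt hT1.le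
    have hb2 : b^2 = (m:ℝ) := Real.sq_sqrt hmR.le
    rw [← ha2, ← hb2]
    field_simp
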